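/- For every μ ∈ (0, (15 − 3√5)/10], set δ = μ/(3−μ), ν̲ = δ(√δ + 1), ν̄ = √δ(√δ + 1). Then the three-point distribution P* assigning probability μ/(3ν̲) to ν̲, probability μ/(3ν̄) to ν̄, and probability μ/3 to 1 is a Borel probability measure on [0,1] with mean μ (so P* ∈ P_μ), and every feasible mechanism (x,p) satisfies ∫ p dP* ≤ (μ/3)(√δ + 1)². Consequently z*(μ) ≤ (μ/3)(√δ + 1)². -/

import Mathlib

open MeasureTheory Set

noncomputable section

/-- A Borel probability measure on ℝ supported on `[0,1]`. -/
def IsDistOn01 (P : Measure ℝ) : Prop :=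
  IsProbabilityMeasure P ∧ P (Set.Icc (0:ℝ) 1)ᶜ = 0

/-- Membership in the first-moment ambiguity set `P_μ`. -/
def MemAmb (μ : ℝ) (P : Measure ℝ) : Prop :=
  IsDistOn01 P ∧ ∫ ν, ν ∂P = μ

/-- A feasible single-agent mechanism. -/
structure Feasible (x p : ℝ → ℝ) : Prop where
  meas_x : Measurable x
  meas_p : Measurable p
  x_mem : ∀ ν ∈ Set.Icc (0:ℝ) 1, x ν ∈ Set.Icc (0:ℝ) 1
  ic : ∀ ν ∈ Set.Icc (0:ℝ) 1, ∀ νh ∈ Set.Icc (0:ℝ) 1, p ν ≤ ν * (x ν - x νh) + νh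
  ir : ∀ ν ∈ Set.Icc (0:ℝ) 1, p ν ≤ ν * x ν

/-- Worst-case expected payment of a payment rule `p` over the ambiguity set `P_μ`. -/
def worstCase (μ : ℝ) (p : ℝ → ℝ) : ℝ :=
  sInf {v : ℝ | ∃ P : Measure ℝ, MemAmb μ P ∧ v = ∫ ν, p ν ∂P}

/-- The seller's optimal worst-case revenue `z*(μ)`. -/
def zStar (μ : ℝ) : ℝ :=
  sSup {z : ℝ | ∃ x p : ℝ → ℝ, Feasible x p ∧ z = worstCase μ p}

/-- `δ = μ/(3-μ)`. -/
def del (μ : ℝ) : ℝ := μ/(3-μ)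

/-- The low type `ν̲ = δ(√δ + 1)`. -/
def nuL (μ : ℝ) : ℝ := del μ * (Real.sqrt (del μ) + 1)

/-- The middle type `ν̄ = √δ(√δ + 1)`. -/
def nuH (μ : ℝ) : ℝ := Real.sqrt (del μ) * (Real.sqrt (del μ) + 1)

/-- The three-point worst-case distribution. -/
def P3 (μ : ℝ) : Measure ℝ :=
  ENNReal.ofReal (μ/(3*nuL μ)) • Measure.dirac (nuL μ)
    + ENNReal.ofReal (μ/(3*nuH μ)) • Measure.dirac (nuH μ)
    + ENNReal.ofReal (μ/3) • Measure.dirac 1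

lemma integrable_sdirac (f : ℝ → ℝ) (c a : ℝ) :
    Integrable f (ENNReal.ofReal c • Measure.dirac a) := by
  have h : f =ᵐ[Measure.dirac a] fun _ => f a := by
    rw [MeasureTheory.ae_dirac_eq]; exact Filter.eventually_pure.2 rfl
  exact ((integrable_const (f a)).congr h.symm).smul_measure ENNReal.ofReal_ne_top

lemma integral_sdirac (f : ℝ → ℝ) (c a : ℝ) (hc : 0 ≤ c) :
    ∫ ν, f ν ∂(ENNReal.ofReal c • Measure.dirac a) = c * f a := by
  rw [integral_smul_measure, integral_dirac, ENNReal.toReal_ofReal hc, smul_eq_mul]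

lemma integral_P3 (μ : ℝ) (h1 : 0 ≤ μ/(3*nuL μ)) (h2 : 0 ≤ μ/(3*nuH μ)) (h3 : 0 ≤ μ/3)
    (f : ℝ → ℝ) :
    ∫ ν, f ν ∂(P3 μ) = μ/(3*nuL μ) * f (nuL μ) + μ/(3*nuH μ) * f (nuH μ) + μ/3 * f 1 := by
  rw [P3,
    integral_add_measure ((integrable_sdirac f _ _).add_measure (integrable_sdirac f _ _))
      (integrable_sdirac f _ _),
    integral_add_measure (integrable_sdirac f _ _) (integrable_sdirac f _ _),
    integral_sdirac f _ _ h1, integral_sdirac f _ _ h2, integral_sdirac f _ _ h3]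

/-- For `μ ∈ (0, (15 − 3√5)/10]`, the three-point distribution `P*` belongs
to `P_μ`, every feasible mechanism earns at most `(μ/3)(√δ + 1)²` in expectation under `P*`,
and consequently `z*(μ) ≤ (μ/3)(√δ + 1)²`. -/
theorem three_point_upper_bound
    (μ : ℝ) (hμ : μ ∈ Set.Ioc (0:ℝ) ((15 - 3*Real.sqrt 5)/10)) :
    MemAmb μ (P3 μ) ∧
    (∀ x p : ℝ → ℝ, Feasible x p →
      ∫ ν, p ν ∂(P3 μ) ≤ (μ/3)*(Real.sqrt (del μ) + 1)^2) ∧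
    zStar μ ≤ (μ/3)*(Real.sqrt (del μ) + 1)^2 := by
  obtain ⟨hμ0, hμle⟩ := hμ
  set t := Real.sqrt 5 with htdef
  have ht2 : t^2 = 5 := Real.sq_sqrt (by norm_num)
  have ht0 : 0 ≤ t := Real.sqrt_nonneg 5
  have ht : 2 ≤ t := by nlinarith
  have hμ3 : μ < 3 := by nlinarith
  have hden : 0 < 3 - μ := by linarith
  have hdpos : 0 < del μ := div_pos hμ0 hden
  have hd_eq : del μ * (3 - μ) = μ := div_mul_cancel₀ μ hden.ne'
  have hkey : μ * (1 + del μ) = 3 * del μ := by linear_combination (-1 : ℝ) * hd_eq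
  have hdle : del μ ≤ (3 - t)/2 := by
    rw [del, div_le_iff₀ hden]
    nlinarith [mul_le_mul_of_nonneg_right hμle (show (0:ℝ) ≤ 5 - t by nlinarith)]
  set s := Real.sqrt (del μ) with hsdef
  have hs2 : s^2 = del μ := Real.sq_sqrt hdpos.le
  have hs0 : 0 < s := Real.sqrt_pos.2 hdpos
  have hss : s^2 + s ≤ 1 := by
    nlinarith [sq_nonneg (2*s - t + 1), sq_nonneg (s + 1)]
  have hs1 : s ≤ 1 := by nlinarith
  have hnuL : nuL μ = s^2 * (s + 1) := by rw [nuL, ← hsdef, hs2]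
  have hnuH : nuH μ = s * (s + 1) := by rw [nuH, ← hsdef]
  have hLpos : 0 < nuL μ := by rw [hnuL]; positivity
  have hHpos : 0 < nuH μ := by rw [hnuH]; positivity
  have hLmem : nuL μ ∈ Set.Icc (0:ℝ) 1 := by
    refine ⟨hLpos.le, ?_⟩; rw [hnuL]; nlinarith
  have hHmem : nuH μ ∈ Set.Icc (0:ℝ) 1 := by
    refine ⟨hHpos.le, ?_⟩; rw [hnuH]; nlinarith
  have h1mem : (1:ℝ) ∈ Set.Icc (0:ℝ) 1 := by norm_num
  have hw1 : 0 ≤ μ/(3*nuL μ) := by positivity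
  have hw2 : 0 ≤ μ/(3*nuH μ) := by positivity
  have hw3 : 0 ≤ μ/3 := by positivity
  have hkey' : μ * (1 + s^2) = 3 * s^2 := by rw [hs2]; exact hkey
  have hwsum : μ/(3*nuL μ) + μ/(3*nuH μ) + μ/3 = 1 := by
    rw [hnuL, hnuH]
    have h1 : s ≠ 0 := hs0.ne'
    have h2 : s + 1 ≠ 0 := by positivity
    field_simp
    linear_combination (1 + s) * hkey'
  have e1 : μ/(3*nuL μ) * nuL μ = μ/3 := by
    field_simp
  have e2 : μ/(3*nuH μ) * nuH μ = μ/3 := by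
    field_simp
  have e3 : μ/(3*nuH μ) * nuL μ = μ/3 * s := by
    rw [hnuL, hnuH]
    have h1 : s ≠ 0 := hs0.ne'
    have h2 : s + 1 ≠ 0 := by positivity
    field_simp
  -- membership in the ambiguity set
  have hprob : IsProbabilityMeasure (P3 μ) := by
    constructor
    rw [P3]
    simp only [Measure.add_apply, Measure.smul_apply, measure_univ, smul_eq_mul, mul_one]
    rw [← ENNReal.ofReal_add hw1 hw2, ← ENNReal.ofReal_add (add_nonneg hw1 hw2) hw3, hwsum,
      ENNReal.ofReal_one]
  have hsupp : P3 μ (Set.Icc (0:ℝ) 1)ᶜ = 0 := by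
    have hms : MeasurableSet (Set.Icc (0:ℝ) 1)ᶜ := measurableSet_Icc.compl
    rw [P3, Measure.add_apply, Measure.add_apply, Measure.smul_apply, Measure.smul_apply,
      Measure.smul_apply, Measure.dirac_apply' _ hms, Measure.dirac_apply' _ hms,
      Measure.dirac_apply' _ hms]
    rw [Set.indicator_of_notMem (by simpa using hLmem),
      Set.indicator_of_notMem (by simpa using hHmem),
      Set.indicator_of_notMem (by simpa using h1mem)]
    simp
  have hmean : ∫ ν, ν ∂(P3 μ) = μ := by
    rw [show (fun ν : ℝ => ν) = (fun ν : ℝ => id ν) from rfl, integral_P3 μ hw1 hw2 hw3]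
    simp only [id]
    rw [e1, e2]
    linarith
  have hmem : MemAmb μ (P3 μ) := ⟨⟨hprob, hsupp⟩, hmean⟩
  -- payment bound
  have hbound : ∀ x p : ℝ → ℝ, Feasible x p →
      ∫ ν, p ν ∂(P3 μ) ≤ (μ/3)*(s + 1)^2 := by
    intro x p hf
    have hp1 := hf.ir _ hLmem
    have hp2 := hf.ic _ hHmem _ hLmem
    have hp3 := hf.ic 1 h1mem _ hHmem
    have hx1 : x 1 ≤ 1 := (hf.x_mem 1 h1mem).2
    rw [integral_P3 μ hw1 hw2 hw3]
    have b1 : μ/(3*nuL μ) * p (nuL μ) ≤ μ/3 * x (nuL μ) := by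
      calc μ/(3*nuL μ) * p (nuL μ) ≤ μ/(3*nuL μ) * (nuL μ * x (nuL μ)) :=
            mul_le_mul_of_nonneg_left hp1 hw1
        _ = (μ/(3*nuL μ) * nuL μ) * x (nuL μ) := by ring
        _ = μ/3 * x (nuL μ) := by rw [e1]
    have b2 : μ/(3*nuH μ) * p (nuH μ) ≤ μ/3 * x (nuH μ) - μ/3 * x (nuL μ) + μ/3 * s := by
      calc μ/(3*nuH μ) * p (nuH μ)
          ≤ μ/(3*nuH μ) * (nuH μ * (x (nuH μ) - x (nuL μ)) + nuL μ) :=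
            mul_le_mul_of_nonneg_left hp2 hw2
        _ = (μ/(3*nuH μ) * nuH μ) * (x (nuH μ) - x (nuL μ)) + μ/(3*nuH μ) * nuL μ := by ring
        _ = μ/3 * (x (nuH μ) - x (nuL μ)) + μ/3 * s := by rw [e2, e3]
        _ = μ/3 * x (nuH μ) - μ/3 * x (nuL μ) + μ/3 * s := by ring
    have b3 : μ/3 * p 1 ≤ μ/3 * x 1 - μ/3 * x (nuH μ) + μ/3 * (s^2 + s) := by
      calc μ/3 * p 1 ≤ μ/3 * (1 * (x 1 - x (nuH μ)) + nuH μ) :=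
            mul_le_mul_of_nonneg_left hp3 hw3
        _ = μ/3 * x 1 - μ/3 * x (nuH μ) + μ/3 * nuH μ := by ring
        _ = μ/3 * x 1 - μ/3 * x (nuH μ) + μ/3 * (s^2 + s) := by rw [hnuH]; ring
    have hx1' : μ/3 * x 1 ≤ μ/3 * 1 := mul_le_mul_of_nonneg_left hx1 hw3
    calc μ/(3*nuL μ) * p (nuL μ) + μ/(3*nuH μ) * p (nuH μ) + μ/3 * p 1
        ≤ μ/3 * 1 + μ/3 * s + μ/3 * (s^2 + s) := by linarith
      _ = μ/3 * (s + 1)^2 := by ring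
  refine ⟨hmem, hbound, ?_⟩
  have hbnn : 0 ≤ (μ/3)*(s + 1)^2 := by positivity
  rw [zStar]
  apply Real.sSup_le _ hbnn
  rintro z ⟨x, p, hfeas, rfl⟩
  rw [worstCase]
  by_cases hbdd : BddBelow {v : ℝ | ∃ P : Measure ℝ, MemAmb μ P ∧ v = ∫ ν, p ν ∂P}
  · exact le_trans (csInf_le hbdd ⟨P3 μ, hmem, rfl⟩) (hbound x p hfeas)
  · rw [Real.sInf_of_not_bddBelow hbdd]; exact hbnn

end
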